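/- Let V be a finite-dimensional real inner product space and let α_1, …, α_{n−1}, β ∈ V be linearly independent vectors such that (α_j | β) > 0 for some fixed j ∈ {1,…,n−1}. Then there exists y ∈ V with (y | α_i) > 0 for all i ∈ {1,…,n−1}, (y | β) = 0, and (y | s_{α_j}(β)) < 0. -/

import Mathlib

open RealInnerProductSpace

/-- The orthogonal reflection in the hyperplane `α^⊥`, given by the formula
`s_α(v) = v − (2(α|v)/(α|α)) • α`. -/
noncomputable def sFun {V : Type*} [NormedAddCommGroup V] [InnerProductSpace ℝ V]
    (α v : V) : V :=
  v - (2 * ⟪α, v⟫ / ⟪α, α⟫) • α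

private lemma sumExtend_inl {V : Type*} [NormedAddCommGroup V] [InnerProductSpace ℝ V]
    {m : ℕ} (w : Fin m → V) (hli : LinearIndependent ℝ w) (i : Fin m) :
    (Module.Basis.sumExtend hli) (Sum.inl i) = w i := by
  simp [Module.Basis.sumExtend, Module.Basis.extend_apply_self, Equiv.Set.sumDiffSubset,
    Equiv.ofInjective, Equiv.Set.union, Equiv.Set.union', Equiv.sumCongr,
    Equiv.ofLeftInverse, Equiv.symm_symm, Equiv.trans_apply, Equiv.coe_fn_mk, Equiv.setCongr_apply]
  rfl

theorem stmt_14 {V : Type*} [NormedAddCommGroup V] [InnerProductSpace ℝ V]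
    [FiniteDimensional ℝ V] (k : ℕ) (α : Fin k → V) (β : V)
    (hli : LinearIndependent ℝ (Fin.cons β α : Fin (k + 1) → V))
    (j : Fin k) (hj : 0 < ⟪α j, β⟫) :
    ∃ y : V, (∀ i, 0 < ⟪y, α i⟫) ∧ ⟪y, β⟫ = 0 ∧ ⟪y, sFun (α j) β⟫ < 0 := by
  set w : Fin (k + 1) → V := Fin.cons β α with hw
  let b := Module.Basis.sumExtend hli
  -- linear functional: 1 on each α i, 0 on β
  let f : V →ₗ[ℝ] ℝ := ∑ i : Fin k, b.coord (Sum.inl i.succ)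
  have hf : ∀ m : Fin (k + 1), f (w m) = ∑ i : Fin k, if i.succ = m then 1 else 0 := by
    intro m
    simp only [f, LinearMap.sum_apply]
    refine Finset.sum_congr rfl fun i _ => ?_
    rw [← sumExtend_inl w hli m, Module.Basis.coord_apply, Module.Basis.repr_self]
    classical
    rw [Finsupp.single_apply]
    by_cases h : i.succ = m
    · simp [h]
    · have h' : ¬ m = i.succ := fun hh => h hh.symm
      simp [h, h']
  have hfβ : f β = 0 := by
    have := hf 0
    simp only [hw, Fin.cons_zero] at this
    rw [this]
    exact Finset.sum_eq_zero fun i _ => by simp [Fin.succ_ne_zero]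
  have hfα : ∀ i : Fin k, f (α i) = 1 := by
    intro i
    have := hf i.succ
    simp only [hw, Fin.cons_succ] at this
    rw [this, Finset.sum_eq_single i]
    · simp
    · intro x _ hx
      simp [Fin.succ_injective _ |>.ne hx]
    · simp
  -- Riesz representation
  haveI : CompleteSpace V := FiniteDimensional.complete ℝ V
  obtain ⟨y, hy⟩ : ∃ y : V, ∀ x, ⟪y, x⟫ = f x := by
    refine ⟨(InnerProductSpace.toDual ℝ V).symm (LinearMap.toContinuousLinearMap f), fun x => ?_⟩
    exact InnerProductSpace.toDual_symm_apply
  have hyα : ∀ i, 0 < ⟪y, α i⟫ := fun i => by rw [hy, hfα]; norm_num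
  have hyβ : ⟪y, β⟫ = 0 := by rw [hy, hfβ]
  refine ⟨y, hyα, hyβ, ?_⟩
  have hαj : α j ≠ 0 := by
    have := hli.ne_zero j.succ
    simpa [hw] using this
  have hd : 0 < ⟪α j, α j⟫ := by
    rw [real_inner_self_eq_norm_sq]
    exact pow_pos (norm_pos_iff.mpr hαj) 2
  have hc : 0 < 2 * ⟪α j, β⟫ / ⟪α j, α j⟫ := by positivity
  rw [sFun, inner_sub_right, inner_smul_right, hyβ]
  have := mul_pos hc (hyα j)
  linarith
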